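/- Let p, q ∈ ℤ and let λ be a non-real root of X² − pX − q (so p² + 4q < 0). Let m ≥ 1, A = I_m ⊗ R, B = R where R = [[Re λ, −Im λ],[Im λ, Re λ]], C = I_{m+1} ⊗ C_f with C_f = [[0, q],[1, p]], and L = H ⊗ [[1, Re λ],[0, Im λ]] for any H ∈ ℝ^{(m+1)×(m+1)}. Then diag(A, B)·L = L·C. -/
import Mathlib


open Matrix Kronecker

/-- For a non-real root `λ` of `X² − pX − q`, with `A = I_m ⊗ R`, `B = R`,
`R` the rotation-scaling matrix of `λ`, `C = I_{m+1} ⊗ C_f` and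
`L = H ⊗ [[1, Re λ],[0, Im λ]]` for any real `H`, one has
`diag(A,B) · L = L · C` (under the natural identification of indices). -/
theorem stmt_12 (p q : ℤ) (lam : ℂ) (him : lam.im ≠ 0)
    (hroot : lam ^ 2 = (p : ℂ) * lam + (q : ℂ))
    (m : ℕ) (hm : 1 ≤ m)
    (R : Matrix (Fin 2) (Fin 2) ℝ) (hR : R = !![lam.re, -lam.im; lam.im, lam.re])
    (Cf : Matrix (Fin 2) (Fin 2) ℝ) (hCf : Cf = !![0, (q : ℝ); 1, (p : ℝ)])
    (H : Matrix (Fin (m + 1)) (Fin (m + 1)) ℝ)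
    (L : Matrix (Fin (m + 1) × Fin 2) (Fin (m + 1) × Fin 2) ℝ)
    (hL : L = H ⊗ₖ !![1, lam.re; 0, lam.im])
    (A : Matrix (Fin m × Fin 2) (Fin m × Fin 2) ℝ)
    (hA : A = (1 : Matrix (Fin m) (Fin m) ℝ) ⊗ₖ R)
    (B : Matrix (Fin 2) (Fin 2) ℝ) (hB : B = R)
    (e : ((Fin m × Fin 2) ⊕ Fin 2) ≃ (Fin (m + 1) × Fin 2))
    (he1 : ∀ (i : Fin m) (a : Fin 2), e (Sum.inl (i, a)) = (i.castSucc, a))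
    (he2 : ∀ a : Fin 2, e (Sum.inr a) = (Fin.last m, a)) :
    (Matrix.reindex e e (Matrix.fromBlocks A 0 0 B)) * L =
      L * ((1 : Matrix (Fin (m + 1)) (Fin (m + 1)) ℝ) ⊗ₖ Cf) := by
  -- real and imaginary part identities from the root equation
  have hre : lam.re ^ 2 - lam.im ^ 2 = (p : ℝ) * lam.re + (q : ℝ) := by
    have := congrArg Complex.re hroot
    simp [Complex.mul_re, pow_two, Complex.add_re] at this
    ring_nf
    ring_nf at this
    linarith
  have him2 : 2 * lam.re * lam.im = (p : ℝ) * lam.im := by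
    have := congrArg Complex.im hroot
    simp [Complex.mul_im, pow_two, Complex.add_im] at this
    linarith
  have esymm1 : ∀ (i : Fin m) (a : Fin 2), e.symm (i.castSucc, a) = Sum.inl (i, a) := by
    intro i a; rw [Equiv.symm_apply_eq, he1]
  have esymm2 : ∀ a : Fin 2, e.symm (Fin.last m, a) = Sum.inr a := by
    intro a; rw [Equiv.symm_apply_eq, he2]
  have key : (Matrix.reindex e e (Matrix.fromBlocks A 0 0 B)) =
      (1 : Matrix (Fin (m + 1)) (Fin (m + 1)) ℝ) ⊗ₖ R := by
    ext ⟨i, a⟩ ⟨j, b⟩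
    rw [Matrix.reindex_apply, Matrix.submatrix_apply, Matrix.kroneckerMap_apply]
    induction i using Fin.lastCases with
    | last =>
      induction j using Fin.lastCases with
      | last =>
        rw [esymm2, esymm2]
        simp [hB]
      | cast j =>
        rw [esymm2, esymm1]
        have : Fin.last m ≠ j.castSucc := (Fin.castSucc_lt_last j).ne'
        simp [Matrix.one_apply, this]
    | cast i =>
      induction j using Fin.lastCases with
      | last =>
        rw [esymm1, esymm2]
        have : i.castSucc ≠ Fin.last m := (Fin.castSucc_lt_last i).ne
        simp [Matrix.one_apply, this]
      | cast j =>
        rw [esymm1, esymm1]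
        simp [hA, Matrix.one_apply, Fin.castSucc_inj]
  have hRM : R * !![1, lam.re; 0, lam.im] = !![1, lam.re; 0, lam.im] * Cf := by
    rw [hR, hCf]
    ext a b
    fin_cases a <;> fin_cases b <;>
      simp [Matrix.mul_apply, Fin.sum_univ_two] <;> nlinarith [hre, him2]
  rw [key, hL, ← Matrix.mul_kronecker_mul, ← Matrix.mul_kronecker_mul, one_mul,
    Matrix.mul_one, hRM]
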